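/- arXiv:2012.14198 — 2 statements merged into one kernel-verified Lean document; each statement's English description precedes it below -/
import Mathlib

section
/- For each j = 1, …, n and all Z, Z′ ∈ ℝ^{2n}: applying b_j⁺ to 𝒫(·,Z′) in the first variable gives 0, and applying b_j to 𝒫(·,Z′) in the first variable gives a_j (z̄_j − conj(z′_j)) 𝒫(Z,Z′); that is, (b_j⁺𝒫)(Z,Z′) = 0 and (b_j𝒫)(Z,Z′) = a_j(z̄_j − conj(z′_j))𝒫(Z,Z′). -/
open MeasureTheory Complex Finset Function

noncomputable section

variable {n : ℕ}

/-- Wirtinger derivative `∂/∂z_j`. -/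
def wdz (j : Fin n) (u : (Fin n → ℂ) → ℂ) (Z : Fin n → ℂ) : ℂ :=
  (1 / 2 : ℂ) * (fderiv ℝ u Z (Pi.single j 1) - Complex.I * fderiv ℝ u Z (Pi.single j Complex.I))

/-- Wirtinger derivative `∂/∂z̄_j`. -/
def wdzbar (j : Fin n) (u : (Fin n → ℂ) → ℂ) (Z : Fin n → ℂ) : ℂ :=
  (1 / 2 : ℂ) * (fderiv ℝ u Z (Pi.single j 1) + Complex.I * fderiv ℝ u Z (Pi.single j Complex.I))

/-- The operator `b_j = -2 ∂/∂z_j + (1/2) a_j z̄_j`. -/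
def opb (a : Fin n → ℝ) (j : Fin n) (u : (Fin n → ℂ) → ℂ) (Z : Fin n → ℂ) : ℂ :=
  -2 * wdz j u Z + (1 / 2 : ℂ) * (a j : ℂ) * (starRingEnd ℂ) (Z j) * u Z

/-- The operator `b_j⁺ = 2 ∂/∂z̄_j + (1/2) a_j z_j`. -/
def opbplus (a : Fin n → ℝ) (j : Fin n) (u : (Fin n → ℂ) → ℂ) (Z : Fin n → ℂ) : ℂ :=
  2 * wdzbar j u Z + (1 / 2 : ℂ) * (a j : ℂ) * Z j * u Z

/-- The operator `b̄_j = -2 ∂/∂z̄_j + (1/2) a_j z_j`. -/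
def opbbar (a : Fin n → ℝ) (j : Fin n) (u : (Fin n → ℂ) → ℂ) (Z : Fin n → ℂ) : ℂ :=
  -2 * wdzbar j u Z + (1 / 2 : ℂ) * (a j : ℂ) * Z j * u Z

/-- The operator `b̄_j⁺ = 2 ∂/∂z_j + (1/2) a_j z̄_j`. -/
def opbbarplus (a : Fin n → ℝ) (j : Fin n) (u : (Fin n → ℂ) → ℂ) (Z : Fin n → ℂ) : ℂ :=
  2 * wdz j u Z + (1 / 2 : ℂ) * (a j : ℂ) * (starRingEnd ℂ) (Z j) * u Z

/-- `b^k = b_1^{k_1} ∘ ⋯ ∘ b_n^{k_n}`. -/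
def bPow (a : Fin n → ℝ) (k : Fin n → ℕ) : ((Fin n → ℂ) → ℂ) → (Fin n → ℂ) → ℂ :=
  ((List.finRange n).map fun j => (opb a j)^[k j]).foldr (· ∘ ·) id

/-- `(b̄)^k = b̄_1^{k_1} ∘ ⋯ ∘ b̄_n^{k_n}`. -/
def bbarPow (a : Fin n → ℝ) (k : Fin n → ℕ) : ((Fin n → ℂ) → ℂ) → (Fin n → ℂ) → ℂ :=
  ((List.finRange n).map fun j => (opbbar a j)^[k j]).foldr (· ∘ ·) id

/-- The Bergman kernel `𝒫(Z,Z′)`. -/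
def bergman (a : Fin n → ℝ) (Z Z' : Fin n → ℂ) : ℂ :=
  ((((2 * Real.pi) ^ n)⁻¹ * ∏ j, a j : ℝ) : ℂ) *
    Complex.exp (-(1 / 4 : ℂ) * ∑ m, (a m : ℂ) *
      (((‖Z m‖ ^ 2 : ℝ) : ℂ) + ((‖Z' m‖ ^ 2 : ℝ) : ℂ) -
        2 * Z m * (starRingEnd ℂ) (Z' m)))

/-- The Landau level `Λ_k = Σ_j (2k_j+1) a_j`. -/
def Lam (a : Fin n → ℝ) (k : Fin n → ℕ) : ℝ := ∑ j, (2 * (k j : ℝ) + 1) * a j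

/-- The kernel `P_{Λ_k}(Z,Z′) = (2^{|k|} a^k k!)⁻¹ b^k_Z (b̄)^k_{Z′} 𝒫(Z,Z′)`. -/
def PLam (a : Fin n → ℝ) (k : Fin n → ℕ) (Z Z' : Fin n → ℂ) : ℂ :=
  (((2 ^ (∑ j, k j) * (∏ j, a j ^ k j) * ∏ j, (Nat.factorial (k j) : ℝ) : ℝ)⁻¹ : ℝ) : ℂ) *
    bPow a k (fun W => bbarPow a k (fun W' => bergman a W W') Z') Z

/-- The integral operator `P_{Λ_k}` acting on functions. -/
def Pop (a : Fin n → ℝ) (k : Fin n → ℕ) (u : (Fin n → ℂ) → ℂ) (Z : Fin n → ℂ) : ℂ :=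
  ∫ Z', PLam a k Z Z' * u Z'

/-- `k + e_j`. -/
def addE (k : Fin n → ℕ) (j : Fin n) : Fin n → ℕ := Function.update k j (k j + 1)

/-- `k - e_j` (only used when `k j ≠ 0`). -/
def subE (k : Fin n → ℕ) (j : Fin n) : Fin n → ℕ := Function.update k j (k j - 1)

/-- The functions `φ_β`. -/
def phiB (a : Fin n → ℝ) (β : Fin n → ℕ) (Z : Fin n → ℂ) : ℂ :=
  ((Real.sqrt ((∏ j, a j ^ β j) * (∏ j, a j) /
      ((2 * Real.pi) ^ n * 2 ^ (∑ j, β j) * ∏ j, (Nat.factorial (β j) : ℝ))) : ℝ) : ℂ) *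
    (∏ j, Z j ^ β j) *
    Complex.exp (-(1 / 4 : ℂ) * ∑ j, (a j : ℂ) * ((‖Z j‖ ^ 2 : ℝ) : ℂ))

/-- The functions `φ_{k,β} = (2^{|k|} a^k k!)^{-1/2} b^k φ_β`. -/
def phiKB (a : Fin n → ℝ) (k β : Fin n → ℕ) (Z : Fin n → ℂ) : ℂ :=
  (((Real.sqrt (2 ^ (∑ j, k j) * (∏ j, a j ^ k j) * ∏ j, (Nat.factorial (k j) : ℝ)))⁻¹ : ℝ) : ℂ) *
    bPow a k (phiB a β) Z

/-- `∂/∂Z_{2j-1} + (i/2) a_j Z_{2j}`. -/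
def opAA (a : Fin n → ℝ) (j : Fin n) (u : (Fin n → ℂ) → ℂ) (Z : Fin n → ℂ) : ℂ :=
  fderiv ℝ u Z (Pi.single j 1) + (Complex.I / 2) * (a j : ℂ) * ((Z j).im : ℂ) * u Z

/-- `∂/∂Z_{2j} - (i/2) a_j Z_{2j-1}`. -/
def opBB (a : Fin n → ℝ) (j : Fin n) (u : (Fin n → ℂ) → ℂ) (Z : Fin n → ℂ) : ℂ :=
  fderiv ℝ u Z (Pi.single j Complex.I) - (Complex.I / 2) * (a j : ℂ) * ((Z j).re : ℂ) * u Z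

/-- The model operator `ℋ⁰`. -/
def H0 (a : Fin n → ℝ) (u : (Fin n → ℂ) → ℂ) (Z : Fin n → ℂ) : ℂ :=
  ∑ j, (-(opAA a j (opAA a j u) Z) - opBB a j (opBB a j u) Z)

/-- Generalized Laguerre polynomial `L^{(m)}_k`. -/
def laguerre (m k : ℕ) (x : ℂ) : ℂ :=
  ∑ j ∈ Finset.range (k + 1), (Nat.choose (k + m) (k - j) : ℂ) * (-x) ^ j / (Nat.factorial j : ℂ)

/-- The kernel of `P_Λ = Σ_{k ∈ K_Λ} P_{Λ_k}`. -/
def PLamL (a : Fin n → ℝ) (Λ : ℝ) (Z Z' : Fin n → ℂ) : ℂ :=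
  ∑' k : Fin n → ℕ, if Lam a k = Λ then PLam a k Z Z' else 0

/-- The integral operator `P_Λ` acting on functions. -/
def PopL (a : Fin n → ℝ) (Λ : ℝ) (u : (Fin n → ℂ) → ℂ) (Z : Fin n → ℂ) : ℂ :=
  ∫ Z', PLamL a Λ Z Z' * u Z'

lemma fderiv_bergman (a : Fin n → ℝ) (Z Z' : Fin n → ℂ) (j : Fin n) (c : ℂ) :
    fderiv ℝ (fun W => bergman a W Z') Z (Pi.single j c) =
      bergman a Z Z' * (-(1/4) * (a j : ℂ) *
        (c * (starRingEnd ℂ) (Z j) + Z j * (starRingEnd ℂ) c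
          - 2 * c * (starRingEnd ℂ) (Z' j))) := by
  classical
  set K : ℂ := ((((2 * Real.pi) ^ n)⁻¹ * ∏ j, a j : ℝ) : ℂ) with hK
  have habs : ∀ w : ℂ, ((‖w‖ ^ 2 : ℝ) : ℂ) = w * (starRingEnd ℂ) w := by
    intro w; rw [Complex.sq_norm]; exact (Complex.mul_conj w).symm
  have hfun : (fun W => bergman a W Z') = fun W : Fin n → ℂ =>
      K * Complex.exp (-(1 / 4 : ℂ) * ∑ m, (a m : ℂ) *
        (W m * (starRingEnd ℂ) (W m) + ((‖Z' m‖ ^ 2 : ℝ) : ℂ) -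
          2 * W m * (starRingEnd ℂ) (Z' m))) := by
    funext W
    simp only [bergman, habs, hK]
  have hproj : ∀ m : Fin n, HasFDerivAt (fun W : Fin n → ℂ => W m)
      (ContinuousLinearMap.proj (R := ℝ) m) Z := fun m => hasFDerivAt_apply m Z
  have hconj : ∀ m : Fin n, HasFDerivAt (fun W : Fin n → ℂ => (starRingEnd ℂ) (W m))
      (Complex.conjCLE.toContinuousLinearMap.comp (ContinuousLinearMap.proj m)) Z :=
    fun m => Complex.conjCLE.toContinuousLinearMap.hasFDerivAt.comp Z (hproj m)
  have hterm : ∀ m : Fin n, HasFDerivAt (fun W : Fin n → ℂ => (a m : ℂ) *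
      (W m * (starRingEnd ℂ) (W m) + ((‖Z' m‖ ^ 2 : ℝ) : ℂ) -
        2 * W m * (starRingEnd ℂ) (Z' m))) _ Z :=
    fun m => ((((hproj m).mul (hconj m)).add_const _).sub
      (((hproj m).const_mul 2).mul_const _)).const_mul _
  have hsum := HasFDerivAt.fun_sum (u := Finset.univ) (fun m _ => hterm m)
  have hexp := ((hsum.const_mul (-(1/4 : ℂ))).cexp).const_mul K
  have hbz : bergman a Z Z' = K * Complex.exp (-(1 / 4 : ℂ) * ∑ m, (a m : ℂ) *
      (Z m * (starRingEnd ℂ) (Z m) + ((‖Z' m‖ ^ 2 : ℝ) : ℂ) -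
        2 * Z m * (starRingEnd ℂ) (Z' m))) := congrFun hfun Z
  rw [hfun, hexp.fderiv]
  simp only [ContinuousLinearMap.smul_apply, smul_eq_mul]
  rw [← mul_assoc, ← hbz]
  rw [mul_comm (bergman a Z Z')]
  rw [mul_comm (bergman a Z Z') (-(1 / 4 : ℂ) * _ * _)]
  simp only [ContinuousLinearMap.sum_apply, ContinuousLinearMap.smul_apply,
    ContinuousLinearMap.add_apply, ContinuousLinearMap.sub_apply,
    ContinuousLinearMap.comp_apply, ContinuousLinearMap.proj_apply, smul_eq_mul,
    ContinuousLinearEquiv.coe_coe, Complex.conjCLE_apply]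
  rw [Finset.sum_eq_single j]
  · simp only [Pi.single_eq_same]
    ring
  · intro m _ hm
    simp [Pi.single_eq_of_ne hm]
  · simp

theorem b_on_bergman
    (n : ℕ) (hn : 1 ≤ n) (a : Fin n → ℝ) (ha : ∀ j, 0 < a j)
    (j : Fin n) (Z Z' : Fin n → ℂ) :
    opbplus a j (fun W => bergman a W Z') Z = 0 ∧
    opb a j (fun W => bergman a W Z') Z
      = (a j : ℂ) * ((starRingEnd ℂ) (Z j) - (starRingEnd ℂ) (Z' j)) * bergman a Z Z' := by
  have key := fderiv_bergman a Z Z'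
  unfold opbplus opb wdzbar wdz
  rw [key j 1, key j Complex.I]
  simp only [map_one, Complex.conj_I, mul_one, one_mul]
  constructor
  · ring_nf
    simp [Complex.I_sq]
  · ring_nf
    simp [Complex.I_sq]
    ring
end
end

section
/- (Explicit formula for the Landau-level projection kernel.) For every multi-index k ∈ (ℤ≥0)^n and all Z, Z′ ∈ ℝ^{2n}, P_{Λ_k}(Z,Z′) = (2π)^{−n} (∏_{j=1}^n a_j L_{k_j}( a_j|z_j − z′_j|²/2 )) · exp(−(1/4) Σ_{m=1}^n a_m (|z_m|² + |z′_m|² − 2 z_m conj(z′_m))), where L_k denotes the k-th Laguerre polynomial L_k(x) = Σ_{j=0}^{k} binom(k, k−j)(−x)^j/j!. -/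
open MeasureTheory Complex Finset Function

noncomputable section

variable {n : ℕ}

namespace LLP

local notation "conj'" => (starRingEnd ℂ)

def dmap (d₁ d₂ : ℂ) : ℂ →L[ℝ] ℂ :=
  d₁ • (ContinuousLinearMap.id ℝ ℂ)
    + d₂ • ((Complex.conjCLE : ℂ ≃L[ℝ] ℂ) : ℂ →L[ℝ] ℂ)

@[simp] lemma dmap_apply (d₁ d₂ h : ℂ) :
    dmap d₁ d₂ h = d₁ * h + d₂ * conj' h := by
  simp [dmap]

lemma hasFDerivAt_of_hasDerivAt {f : ℂ → ℂ} {d z : ℂ} (h : HasDerivAt f d z) :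
    HasFDerivAt f (dmap d 0) z := by
  have h2 := h.hasFDerivAt.restrictScalars ℝ
  refine h2.congr_fderiv ?_
  ext w
  simp [mul_comm]

lemma hasFDerivAt_conj_comp {f : ℂ → ℂ} {d z : ℂ}
    (h : HasDerivAt f d (conj' z)) :
    HasFDerivAt (fun w => f (conj' w)) (dmap 0 d) z := by
  have hc : HasFDerivAt (fun w : ℂ => conj' w)
      ((Complex.conjCLE : ℂ ≃L[ℝ] ℂ) : ℂ →L[ℝ] ℂ) z := Complex.conjCLE.hasFDerivAt
  have h2 := (h.hasFDerivAt.restrictScalars ℝ).comp z hc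
  refine h2.congr_fderiv ?_
  ext w
  simp [mul_comm]

/-- The universal 1D building block. -/
def gfun (c : ℂ) (p q : ℕ) (ε β γ δ : ℂ) (z : ℂ) : ℂ :=
  (c - z) ^ p * (conj' z - conj' c) ^ q *
    Complex.exp (ε * (z * conj' z) + β * z + γ * conj' z + δ)

lemma gfun_hasFDerivAt (c : ℂ) (p q : ℕ) (ε β γ δ z : ℂ) :
    HasFDerivAt (gfun c p q ε β γ δ)
      (dmap
        (((-(p : ℂ)) * (c - z) ^ (p - 1) * (conj' z - conj' c) ^ q
            + (c - z) ^ p * (conj' z - conj' c) ^ q * (ε * conj' z + β)) *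
          Complex.exp (ε * (z * conj' z) + β * z + γ * conj' z + δ))
        (((q : ℂ) * (c - z) ^ p * (conj' z - conj' c) ^ (q - 1)
            + (c - z) ^ p * (conj' z - conj' c) ^ q * (ε * z + γ)) *
          Complex.exp (ε * (z * conj' z) + β * z + γ * conj' z + δ))) z := by
  have hA : HasFDerivAt (fun z : ℂ => (c - z) ^ p)
      (dmap ((p : ℂ) * (c - z) ^ (p - 1) * (-1)) 0) z :=
    hasFDerivAt_of_hasDerivAt (((hasDerivAt_id z).const_sub c).pow p)
  have hB : HasFDerivAt (fun z : ℂ => (conj' z - conj' c) ^ q)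
      (dmap 0 ((q : ℂ) * (conj' z - conj' c) ^ (q - 1) * 1)) z := by
    exact hasFDerivAt_conj_comp (((hasDerivAt_id (conj' z)).sub_const (conj' c)).pow q)
  have hid : HasFDerivAt (fun z : ℂ => z) (dmap 1 0) z :=
    hasFDerivAt_of_hasDerivAt (hasDerivAt_id z)
  have hconj : HasFDerivAt (fun z : ℂ => conj' z) (dmap 0 1) z := by
    exact hasFDerivAt_conj_comp (hasDerivAt_id (conj' z))
  have hφ : HasFDerivAt (fun z : ℂ => ε * (z * conj' z) + β * z + γ * conj' z + δ)
      (dmap (ε * conj' z + β) (ε * z + γ)) z := by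
    have h1 := ((hid.mul hconj).const_mul ε).add (hid.const_mul β)
    have h2 := (h1.add (hconj.const_mul γ)).add_const δ
    refine h2.congr_fderiv ?_
    ext w
    simp
    ring
  have hE := hφ.cexp
  have h := (hA.mul hB).mul hE
  refine h.congr_fderiv ?_
  ext w
  simp only [dmap_apply, ContinuousLinearMap.add_apply, ContinuousLinearMap.smul_apply,
    smul_eq_mul, gfun, Pi.mul_apply]
  ring

lemma gfun_diff (c : ℂ) (p q : ℕ) (ε β γ δ : ℂ) :
    Differentiable ℝ (gfun c p q ε β γ δ) :=
  fun z => (gfun_hasFDerivAt c p q ε β γ δ z).differentiableAt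

/-- 1D Wirtinger derivatives. -/
def wd1 (f : ℂ → ℂ) (z : ℂ) : ℂ :=
  (1 / 2 : ℂ) * (fderiv ℝ f z 1 - Complex.I * fderiv ℝ f z Complex.I)

def wdb1 (f : ℂ → ℂ) (z : ℂ) : ℂ :=
  (1 / 2 : ℂ) * (fderiv ℝ f z 1 + Complex.I * fderiv ℝ f z Complex.I)

lemma wd1_of {f : ℂ → ℂ} {d1 d2 z : ℂ} (h : HasFDerivAt f (dmap d1 d2) z) :
    wd1 f z = d1 := by
  rw [wd1, h.fderiv]
  simp only [dmap_apply, map_one, Complex.conj_I, mul_one]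
  ring_nf
  simp only [Complex.I_sq]
  ring

lemma wdb1_of {f : ℂ → ℂ} {d1 d2 z : ℂ} (h : HasFDerivAt f (dmap d1 d2) z) :
    wdb1 f z = d2 := by
  rw [wdb1, h.fderiv]
  simp only [dmap_apply, map_one, Complex.conj_I, mul_one]
  ring_nf
  simp only [Complex.I_sq]
  ring


lemma wd1_gfun (c : ℂ) (p q : ℕ) (ε β γ δ z : ℂ) :
    wd1 (gfun c p q ε β γ δ) z =
      ((-(p : ℂ)) * (c - z) ^ (p - 1) * (conj' z - conj' c) ^ q
          + (c - z) ^ p * (conj' z - conj' c) ^ q * (ε * conj' z + β)) *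
        Complex.exp (ε * (z * conj' z) + β * z + γ * conj' z + δ) :=
  wd1_of (gfun_hasFDerivAt c p q ε β γ δ z)

lemma wdb1_gfun (c : ℂ) (p q : ℕ) (ε β γ δ z : ℂ) :
    wdb1 (gfun c p q ε β γ δ) z =
      ((q : ℂ) * (c - z) ^ p * (conj' z - conj' c) ^ (q - 1)
          + (c - z) ^ p * (conj' z - conj' c) ^ q * (ε * z + γ)) *
        Complex.exp (ε * (z * conj' z) + β * z + γ * conj' z + δ) :=
  wdb1_of (gfun_hasFDerivAt c p q ε β γ δ z)

def ob1 (α : ℂ) (f : ℂ → ℂ) (z : ℂ) : ℂ :=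
  -2 * wd1 f z + (1 / 2 : ℂ) * α * conj' z * f z
def obb1 (α : ℂ) (f : ℂ → ℂ) (z : ℂ) : ℂ :=
  -2 * wdb1 f z + (1 / 2 : ℂ) * α * z * f z

/-- family for the first-slot computation -/
def g1 (α δ c : ℂ) (p q : ℕ) : ℂ → ℂ :=
  gfun c p q (-(1 / 4 : ℂ) * α) ((1 / 2 : ℂ) * α * conj' c) 0 δ
/-- family for the second-slot computation -/
def g2 (α δ c : ℂ) (p : ℕ) : ℂ → ℂ :=
  gfun c p 0 (-(1 / 4 : ℂ) * α) 0 ((1 / 2 : ℂ) * α * c) δ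

lemma ob1_g1 (α δ c : ℂ) (p q : ℕ) :
    ob1 α (g1 α δ c p q) = fun z =>
      2 * (p : ℂ) * g1 α δ c (p - 1) q z + α * g1 α δ c p (q + 1) z := by
  funext z
  rw [ob1, g1, wd1_gfun]
  simp only [g1, gfun, pow_succ]
  ring

lemma obb1_g2 (α δ c : ℂ) (p : ℕ) :
    obb1 α (g2 α δ c p) = fun z => -α * g2 α δ c (p + 1) z := by
  funext z
  rw [obb1, g2, wdb1_gfun]
  simp only [g2, gfun, pow_succ, pow_zero, Nat.cast_zero]
  ring

lemma ob1_const_mul {f : ℂ → ℂ} (hf : Differentiable ℝ f) (α b : ℂ) :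
    ob1 α (fun z => b * f z) = fun z => b * ob1 α f z := by
  funext z
  simp only [ob1, wd1]
  rw [fderiv_const_mul (hf z) b]
  simp only [ContinuousLinearMap.smul_apply, smul_eq_mul]
  ring

lemma obb1_const_mul {f : ℂ → ℂ} (hf : Differentiable ℝ f) (α b : ℂ) :
    obb1 α (fun z => b * f z) = fun z => b * obb1 α f z := by
  funext z
  simp only [obb1, wdb1]
  rw [fderiv_const_mul (hf z) b]
  simp only [ContinuousLinearMap.smul_apply, smul_eq_mul]
  ring

lemma ob1_sum {ι : Type*} (s : Finset ι) (F : ι → ℂ → ℂ)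
    (hF : ∀ i ∈ s, Differentiable ℝ (F i)) (α : ℂ) :
    ob1 α (fun z => ∑ i ∈ s, F i z) = fun z => ∑ i ∈ s, ob1 α (F i) z := by
  funext z
  simp only [ob1, wd1]
  rw [fderiv_fun_sum (fun i hi => (hF i hi z))]
  simp only [ContinuousLinearMap.sum_apply]
  rw [Finset.mul_sum, ← Finset.sum_sub_distrib, Finset.mul_sum, Finset.mul_sum,
    Finset.mul_sum, ← Finset.sum_add_distrib]

lemma g1_diff (α δ c : ℂ) (p q : ℕ) : Differentiable ℝ (g1 α δ c p q) :=
  gfun_diff _ _ _ _ _ _ _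

lemma g2_diff (α δ c : ℂ) (p : ℕ) : Differentiable ℝ (g2 α δ c p) :=
  gfun_diff _ _ _ _ _ _ _

lemma obb1_iter (α δ c : ℂ) (t : ℕ) :
    (obb1 α)^[t] (g2 α δ c 0) = fun z => (-α) ^ t * g2 α δ c t z := by
  induction t with
  | zero => funext z; simp
  | succ t ih =>
    rw [Function.iterate_succ_apply', ih,
      obb1_const_mul (g2_diff α δ c t) α ((-α) ^ t), obb1_g2]
    funext z
    rw [pow_succ]
    ring

/-- the coefficients in the iterate expansion -/
def coef (p m i : ℕ) (α : ℂ) : ℂ :=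
  (m.choose i : ℂ) * 2 ^ i * (p.descFactorial i : ℂ) * α ^ (m - i)

lemma coef_rec (p m i : ℕ) (h : i ≤ m) (α : ℂ) :
    coef p (m + 1) (i + 1) α
      = 2 * ((p - i : ℕ) : ℂ) * coef p m i α + α * coef p m (i + 1) α := by
  rcases eq_or_lt_of_le h with rfl | h
  · simp [coef, Nat.choose_succ_self, Nat.descFactorial_succ]
    ring
  · have h1 : m - (i + 1) + 1 = m - i := by omega
    rw [coef, coef, coef, Nat.choose_succ_succ, Nat.descFactorial_succ]
    push_cast
    rw [← h1, pow_succ]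
    ring

lemma ob1_iter (α δ c : ℂ) (p m : ℕ) :
    (ob1 α)^[m] (g1 α δ c p 0) = fun z =>
      ∑ i ∈ Finset.range (m + 1), coef p m i α * g1 α δ c (p - i) (m - i) z := by
  induction m with
  | zero => funext z; simp [coef]
  | succ m ih =>
    rw [Function.iterate_succ_apply', ih]
    rw [ob1_sum (Finset.range (m + 1))
      (fun i z => coef p m i α * g1 α δ c (p - i) (m - i) z)
      (fun i _ => (g1_diff α δ c (p - i) (m - i)).const_mul _) α]
    have step : ∀ i ∈ Finset.range (m + 1),
        ob1 α (fun z => coef p m i α * g1 α δ c (p - i) (m - i) z)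
          = fun z => coef p m i α *
              (2 * ((p - i : ℕ) : ℂ) * g1 α δ c (p - (i + 1)) (m - i) z
                + α * g1 α δ c (p - i) (m - i + 1) z) := by
      intro i _
      rw [ob1_const_mul (g1_diff α δ c (p - i) (m - i)) α, ob1_g1]
      funext z
      rw [Nat.sub_sub]
    funext z
    rw [Finset.sum_congr rfl (fun i hi => congrFun (step i hi) z)]
    -- split the sum
    have expand : ∀ i ∈ Finset.range (m + 1),
        coef p m i α *
            (2 * ((p - i : ℕ) : ℂ) * g1 α δ c (p - (i + 1)) (m - i) z
              + α * g1 α δ c (p - i) (m - i + 1) z)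
          = (2 * ((p - i : ℕ) : ℂ) * coef p m i α) * g1 α δ c (p - (i + 1)) (m - i) z
            + (α * coef p m i α) * g1 α δ c (p - i) (m + 1 - i) z := by
      intro i hi
      have : m - i + 1 = m + 1 - i := by
        rw [Finset.mem_range] at hi; omega
      rw [this]; ring
    rw [Finset.sum_congr rfl expand, Finset.sum_add_distrib]
    -- RHS: peel off first term
    rw [Finset.sum_range_succ' (fun i => coef p (m + 1) i α * g1 α δ c (p - i) (m + 1 - i) z)]
    -- second summand on LHS: peel off first term, then extend
    rw [Finset.sum_range_succ' (fun i => (α * coef p m i α) * g1 α δ c (p - i) (m + 1 - i) z)]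
    have ext1 : ∑ i ∈ Finset.range m, (α * coef p m (i + 1) α) *
          g1 α δ c (p - (i + 1)) (m + 1 - (i + 1)) z
        = ∑ i ∈ Finset.range (m + 1), (α * coef p m (i + 1) α) *
          g1 α δ c (p - (i + 1)) (m + 1 - (i + 1)) z := by
      rw [Finset.sum_range_succ]
      have : (m.choose (m + 1) : ℂ) = 0 := by
        rw [Nat.choose_eq_zero_of_lt (by omega)]; simp
      simp [coef, this]
    rw [ext1, ← add_assoc, ← Finset.sum_add_distrib]
    have final : ∀ i ∈ Finset.range (m + 1),
        (2 * ((p - i : ℕ) : ℂ) * coef p m i α) * g1 α δ c (p - (i + 1)) (m - i) z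
            + (α * coef p m (i + 1) α) * g1 α δ c (p - (i + 1)) (m + 1 - (i + 1)) z
          = coef p (m + 1) (i + 1) α * g1 α δ c (p - (i + 1)) (m + 1 - (i + 1)) z := by
      intro i hi
      rw [Finset.mem_range] at hi
      have h2 : m + 1 - (i + 1) = m - i := by omega
      rw [h2, coef_rec p m i (by omega) α]
      ring
    rw [Finset.sum_congr rfl final]
    have h0 : α * coef p m 0 α = coef p (m + 1) 0 α := by
      simp [coef]; ring
    rw [h0]

/-- a constant times a product of single-coordinate functions -/
def GP (c : ℂ) (g : Fin n → ℂ → ℂ) (W : Fin n → ℂ) : ℂ := c * ∏ m, g m (W m)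

lemma fderiv_GP_single (c : ℂ) (g : Fin n → ℂ → ℂ)
    (hg : ∀ m, Differentiable ℝ (g m)) (W : Fin n → ℂ) (j : Fin n) (h : ℂ) :
    fderiv ℝ (GP c g) W (Pi.single j h)
      = c * (fderiv ℝ (g j) (W j) h * ∏ m ∈ Finset.univ.erase j, g m (W m)) := by
  have hf : ∀ m : Fin n, HasFDerivAt (fun W : Fin n → ℂ => g m (W m))
      ((fderiv ℝ (g m) (W m)).comp (ContinuousLinearMap.proj m)) W := by
    intro m
    exact ((hg m (W m)).hasFDerivAt).comp W
      ((ContinuousLinearMap.proj m : (Fin n → ℂ) →L[ℝ] ℂ).hasFDerivAt)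
  have H := HasFDerivAt.finset_prod (u := Finset.univ)
    (g := fun m (W : Fin n → ℂ) => g m (W m))
    (g' := fun m => (fderiv ℝ (g m) (W m)).comp (ContinuousLinearMap.proj m))
    (fun m _ => hf m)
  have H2 := H.const_mul c
  have hGP : GP c g = fun W : Fin n → ℂ => c * ∏ m, g m (W m) := rfl
  rw [hGP, H2.fderiv]
  simp only [ContinuousLinearMap.smul_apply, ContinuousLinearMap.sum_apply,
    ContinuousLinearMap.comp_apply, ContinuousLinearMap.proj_apply, smul_eq_mul]
  rw [Finset.sum_eq_single j]
  · rw [Pi.single_eq_same]; ring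
  · intro m _ hm
    rw [Pi.single_eq_of_ne hm, map_zero, mul_zero]
  · intro hj; exact absurd (Finset.mem_univ j) hj

lemma prod_update_erase (g : Fin n → ℂ → ℂ) (j : Fin n) (F : ℂ → ℂ) (W : Fin n → ℂ) :
    ∏ m, (Function.update g j F) m (W m)
      = F (W j) * ∏ m ∈ Finset.univ.erase j, g m (W m) := by
  rw [← Finset.mul_prod_erase Finset.univ _ (Finset.mem_univ j), Function.update_self]
  congr 1
  apply Finset.prod_congr rfl
  intro m hm
  rw [Function.update_of_ne (Finset.ne_of_mem_erase hm)]

lemma GP_erase (c : ℂ) (g : Fin n → ℂ → ℂ) (j : Fin n) (W : Fin n → ℂ) :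
    GP c g W = c * (g j (W j) * ∏ m ∈ Finset.univ.erase j, g m (W m)) := by
  rw [GP, ← Finset.mul_prod_erase Finset.univ (fun m => g m (W m)) (Finset.mem_univ j)]

lemma GP_update_erase (c : ℂ) (g : Fin n → ℂ → ℂ) (j : Fin n) (F : ℂ → ℂ) (W : Fin n → ℂ) :
    GP c (Function.update g j F) W
      = c * (F (W j) * ∏ m ∈ Finset.univ.erase j, g m (W m)) := by
  rw [GP, prod_update_erase]

lemma opb_GP (a : Fin n → ℝ) (j : Fin n) (c : ℂ) (g : Fin n → ℂ → ℂ)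
    (hg : ∀ m, Differentiable ℝ (g m)) :
    opb a j (GP c g) = GP c (Function.update g j (ob1 ((a j : ℝ) : ℂ) (g j))) := by
  funext W
  rw [opb, wdz, fderiv_GP_single c g hg W j 1, fderiv_GP_single c g hg W j Complex.I,
    GP_update_erase, GP_erase c g j W, ob1, wd1]
  ring

lemma opbbar_GP (a : Fin n → ℝ) (j : Fin n) (c : ℂ) (g : Fin n → ℂ → ℂ)
    (hg : ∀ m, Differentiable ℝ (g m)) :
    opbbar a j (GP c g) = GP c (Function.update g j (obb1 ((a j : ℝ) : ℂ) (g j))) := by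
  funext W
  rw [opbbar, wdzbar, fderiv_GP_single c g hg W j 1, fderiv_GP_single c g hg W j Complex.I,
    GP_update_erase, GP_erase c g j W, obb1, wdb1]
  ring

lemma opb_iter_GP (a : Fin n → ℝ) (j : Fin n) (t : ℕ) (c : ℂ) (g : Fin n → ℂ → ℂ)
    (h1 : ∀ m, Differentiable ℝ (g m))
    (h2 : ∀ s, Differentiable ℝ ((ob1 ((a j : ℝ) : ℂ))^[s] (g j))) :
    (opb a j)^[t] (GP c g) = GP c (Function.update g j ((ob1 ((a j : ℝ) : ℂ))^[t] (g j))) := by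
  induction t with
  | zero => simp
  | succ t ih =>
    rw [Function.iterate_succ_apply', ih, opb_GP a j c _ ?_, Function.update_self,
      Function.update_idem, Function.iterate_succ_apply']
    intro m
    by_cases hm : m = j
    · subst hm; rw [Function.update_self]; exact h2 t
    · rw [Function.update_of_ne hm]; exact h1 m

lemma opbbar_iter_GP (a : Fin n → ℝ) (j : Fin n) (t : ℕ) (c : ℂ) (g : Fin n → ℂ → ℂ)
    (h1 : ∀ m, Differentiable ℝ (g m))
    (h2 : ∀ s, Differentiable ℝ ((obb1 ((a j : ℝ) : ℂ))^[s] (g j))) :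
    (opbbar a j)^[t] (GP c g)
      = GP c (Function.update g j ((obb1 ((a j : ℝ) : ℂ))^[t] (g j))) := by
  induction t with
  | zero => simp
  | succ t ih =>
    rw [Function.iterate_succ_apply', ih, opbbar_GP a j c _ ?_, Function.update_self,
      Function.update_idem, Function.iterate_succ_apply']
    intro m
    by_cases hm : m = j
    · subst hm; rw [Function.update_self]; exact h2 t
    · rw [Function.update_of_ne hm]; exact h1 m

lemma fold_opb (a : Fin n → ℝ) (k : Fin n → ℕ) (l : List (Fin n)) (hl : l.Nodup)
    (c : ℂ) (g : Fin n → ℂ → ℂ)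
    (hg : ∀ m s, Differentiable ℝ ((ob1 ((a m : ℝ) : ℂ))^[s] (g m))) :
    ((l.map fun j => (opb a j)^[k j]).foldr (· ∘ ·) id) (GP c g)
      = GP c (fun m => if m ∈ l then (ob1 ((a m : ℝ) : ℂ))^[k m] (g m) else g m) := by
  induction l with
  | nil => simp [GP]
  | cons j l' ih =>
    rw [List.map_cons, List.foldr_cons, Function.comp_apply,
      ih (List.Nodup.of_cons hl)]
    have hjl' : j ∉ l' := (List.nodup_cons.mp hl).1
    have hgj : (fun m => if m ∈ l' then (ob1 ((a m : ℝ) : ℂ))^[k m] (g m) else g m) j = g j := by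
      simp [hjl']
    rw [opb_iter_GP a j (k j) c _ ?h1 ?h2]
    · refine congrArg (GP c) (funext fun m => ?_)
      by_cases hm : m = j
      · subst hm; simp [Function.update_self, hjl']
      · simp [Function.update_of_ne hm, List.mem_cons, hm]
    case h1 =>
      intro m
      by_cases hml : m ∈ l'
      · simp only [hml, if_true]; exact hg m (k m)
      · simp only [hml, if_false]
        have := hg m 0
        rwa [Function.iterate_zero_apply] at this
    case h2 =>
      intro s
      simp only [hjl', if_false]
      exact hg j s

lemma fold_opbbar (a : Fin n → ℝ) (k : Fin n → ℕ) (l : List (Fin n)) (hl : l.Nodup)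
    (c : ℂ) (g : Fin n → ℂ → ℂ)
    (hg : ∀ m s, Differentiable ℝ ((obb1 ((a m : ℝ) : ℂ))^[s] (g m))) :
    ((l.map fun j => (opbbar a j)^[k j]).foldr (· ∘ ·) id) (GP c g)
      = GP c (fun m => if m ∈ l then (obb1 ((a m : ℝ) : ℂ))^[k m] (g m) else g m) := by
  induction l with
  | nil => simp [GP]
  | cons j l' ih =>
    rw [List.map_cons, List.foldr_cons, Function.comp_apply,
      ih (List.Nodup.of_cons hl)]
    have hjl' : j ∉ l' := (List.nodup_cons.mp hl).1
    have hgj : (fun m => if m ∈ l' then (obb1 ((a m : ℝ) : ℂ))^[k m] (g m) else g m) j = g j := by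
      simp [hjl']
    rw [opbbar_iter_GP a j (k j) c _ ?h1 ?h2]
    · refine congrArg (GP c) (funext fun m => ?_)
      by_cases hm : m = j
      · subst hm; simp [Function.update_self, hjl']
      · simp [Function.update_of_ne hm, List.mem_cons, hm]
    case h1 =>
      intro m
      by_cases hml : m ∈ l'
      · simp only [hml, if_true]; exact hg m (k m)
      · simp only [hml, if_false]
        have := hg m 0
        rwa [Function.iterate_zero_apply] at this
    case h2 =>
      intro s
      simp only [hjl', if_false]
      exact hg j s

lemma bPow_GP (a : Fin n → ℝ) (k : Fin n → ℕ) (c : ℂ) (g : Fin n → ℂ → ℂ)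
    (hg : ∀ m s, Differentiable ℝ ((ob1 ((a m : ℝ) : ℂ))^[s] (g m))) :
    bPow a k (GP c g) = GP c (fun m => (ob1 ((a m : ℝ) : ℂ))^[k m] (g m)) := by
  have := fold_opb a k (List.finRange n) (List.nodup_finRange n) c g hg
  rw [bPow]
  rw [this]
  simp [List.mem_finRange]

lemma bbarPow_GP (a : Fin n → ℝ) (k : Fin n → ℕ) (c : ℂ) (g : Fin n → ℂ → ℂ)
    (hg : ∀ m s, Differentiable ℝ ((obb1 ((a m : ℝ) : ℂ))^[s] (g m))) :
    bbarPow a k (GP c g) = GP c (fun m => (obb1 ((a m : ℝ) : ℂ))^[k m] (g m)) := by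
  have := fold_opbbar a k (List.finRange n) (List.nodup_finRange n) c g hg
  rw [bbarPow]
  rw [this]
  simp [List.mem_finRange]

-- ASSEMBLY
lemma cabs2 (z : ℂ) : ((‖z‖ ^ 2 : ℝ) : ℂ) = z * conj' z := by
  rw [Complex.sq_norm, Complex.mul_conj]

/-- the Bergman kernel as a product of one-variable functions of the second slot -/
lemma bergGP (a : Fin n → ℝ) (W : Fin n → ℂ) :
    (fun W' => bergman a W W')
      = GP ((((2 * Real.pi) ^ n)⁻¹ * ∏ j, a j : ℝ) : ℂ)
          (fun m => g2 ((a m : ℝ) : ℂ)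
            (-(1 / 4 : ℂ) * ((a m : ℝ) : ℂ) * (W m * conj' (W m))) (W m) 0) := by
  funext W'
  rw [bergman, GP]
  congr 1
  simp only [g2, gfun, pow_zero, one_mul, zero_mul, add_zero, zero_add, mul_one]
  rw [← Complex.exp_sum, Finset.mul_sum]
  congr 1
  refine Finset.sum_congr rfl fun m _ => ?_
  rw [cabs2, cabs2]
  ring

lemma swap_slot (α w z' : ℂ) (κ : ℕ) :
    (-α) ^ κ * g2 α (-(1 / 4 : ℂ) * α * (w * conj' w)) w κ z'
      = α ^ κ * g1 α (-(1 / 4 : ℂ) * α * (z' * conj' z')) z' κ 0 w := by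
  simp only [g1, g2, gfun, pow_zero, mul_one, one_mul, zero_mul, add_zero, zero_add]
  have h1 : (-α) ^ κ * (w - z') ^ κ = α ^ κ * (z' - w) ^ κ := by
    rw [← mul_pow, ← mul_pow]
    congr 1
    ring
  rw [show -(1 / 4 : ℂ) * α * (w * conj' w) + 1 / 2 * α * conj' z' * w
        + -(1 / 4 : ℂ) * α * (z' * conj' z')
      = -(1 / 4 : ℂ) * α * (z' * conj' z') + 1 / 2 * α * w * conj' z'
        + -(1 / 4 : ℂ) * α * (w * conj' w) from by ring]
  linear_combination (Complex.exp (-(1 / 4 : ℂ) * α * (z' * conj' z') + 1 / 2 * α * w * conj' z'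
    + -(1 / 4 : ℂ) * α * (w * conj' w))) * h1

lemma claimA (a : Fin n → ℝ) (k : Fin n → ℕ) (Z' : Fin n → ℂ) :
    (fun W => bbarPow a k (fun W' => bergman a W W') Z')
      = GP (((((2 * Real.pi) ^ n)⁻¹ * ∏ j, a j : ℝ) : ℂ) * ∏ m, ((a m : ℝ) : ℂ) ^ k m)
          (fun m => g1 ((a m : ℝ) : ℂ)
            (-(1 / 4 : ℂ) * ((a m : ℝ) : ℂ) * (Z' m * conj' (Z' m))) (Z' m) (k m) 0) := by
  funext W
  rw [bergGP a W]
  rw [bbarPow_GP a k _ _ (fun m s => by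
    rw [obb1_iter]
    exact (g2_diff _ _ _ _).const_mul _)]
  simp only [obb1_iter]
  rw [GP, GP]
  rw [Finset.prod_congr rfl fun m _ => swap_slot ((a m : ℝ) : ℂ) (W m) (Z' m) (k m)]
  rw [Finset.prod_mul_distrib]
  ring

lemma lag_core (κ : ℕ) (α u v : ℂ) :
    ∑ i ∈ Finset.range (κ + 1), coef κ κ i α * (u ^ (κ - i) * v ^ (κ - i))
      = 2 ^ κ * (κ.factorial : ℂ) * laguerre 0 κ (-(α * (u * v)) / 2) := by
  rw [laguerre, ← Finset.sum_range_reflect, Finset.mul_sum]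
  refine Finset.sum_congr rfl fun j hj => ?_
  rw [Finset.mem_range] at hj
  have hj' : j ≤ κ := by omega
  have h1 : κ + 1 - 1 - j = κ - j := by omega
  have h2 : κ - (κ - j) = j := by omega
  rw [h1, coef, h2]
  have hfact : ((κ.descFactorial (κ - j) : ℕ) : ℂ) * ((j.factorial : ℕ) : ℂ)
      = ((κ.factorial : ℕ) : ℂ) := by
    have h := Nat.factorial_mul_descFactorial (n := κ) (k := κ - j) (by omega)
    rw [h2] at h
    exact_mod_cast congrArg (Nat.cast : ℕ → ℂ) (by rw [← h]; ring)
  have hfne : ((j.factorial : ℕ) : ℂ) ≠ 0 := Nat.cast_ne_zero.mpr j.factorial_ne_zero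
  have hpow : (2 : ℂ) ^ (κ - j) * 2 ^ j = 2 ^ κ := by
    rw [← pow_add]
    congr 1
    omega
  rw [Nat.add_zero]
  field_simp
  have hH : (1 / 2 : ℂ) ^ j * 2 ^ j = 1 := by rw [← mul_pow]; norm_num
  linear_combination ((κ.choose (κ - j) : ℂ) * (α ^ j * u ^ j * v ^ j) * (2:ℂ) ^ (κ - j)) * hfact
    + ((κ.choose (κ - j) : ℂ) * (α ^ j * u ^ j * v ^ j) * (κ.factorial : ℂ) * (1 / 2 : ℂ) ^ j) * hpow
    - ((κ.choose (κ - j) : ℂ) * (α ^ j * u ^ j * v ^ j) * (κ.factorial : ℂ) * (2:ℂ) ^ (κ - j)) * hH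

lemma lag_m (κ : ℕ) (α δ c z : ℂ) :
    ∑ i ∈ Finset.range (κ + 1), coef κ κ i α * g1 α δ c (κ - i) (κ - i) z
      = 2 ^ κ * (κ.factorial : ℂ) *
          laguerre 0 κ (α * ((z - c) * (conj' z - conj' c)) / 2) * g1 α δ c 0 0 z := by
  have hfac : ∀ i : ℕ, g1 α δ c i i z
      = (c - z) ^ i * (conj' z - conj' c) ^ i * g1 α δ c 0 0 z := by
    intro i
    simp only [g1, gfun, pow_zero, one_mul]
  have step : ∀ i ∈ Finset.range (κ + 1),
      coef κ κ i α * g1 α δ c (κ - i) (κ - i) z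
        = (coef κ κ i α * ((c - z) ^ (κ - i) * (conj' z - conj' c) ^ (κ - i)))
            * g1 α δ c 0 0 z := by
    intro i _
    rw [hfac (κ - i)]
    ring
  rw [Finset.sum_congr rfl step, ← Finset.sum_mul, lag_core κ α (c - z) (conj' z - conj' c),
    show -(α * ((c - z) * (conj' z - conj' c))) = α * ((z - c) * (conj' z - conj' c)) from by ring]

end LLP

open LLP in
theorem PLam_explicit_formula
    (n : ℕ) (hn : 1 ≤ n) (a : Fin n → ℝ) (ha : ∀ j, 0 < a j)
    (k : Fin n → ℕ) (Z Z' : Fin n → ℂ) :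
    PLam a k Z Z'
      = ((((2 * Real.pi) ^ n)⁻¹ : ℝ) : ℂ) *
        (∏ j, (a j : ℂ) *
          laguerre 0 (k j) ((a j : ℂ) * ((‖Z j - Z' j‖ ^ 2 : ℝ) : ℂ) / 2)) *
        Complex.exp (-(1 / 4 : ℂ) * ∑ m, (a m : ℂ) *
          (((‖Z m‖ ^ 2 : ℝ) : ℂ) + ((‖Z' m‖ ^ 2 : ℝ) : ℂ) -
            2 * Z m * (starRingEnd ℂ) (Z' m))) := by
  rw [PLam, claimA a k Z']
  rw [bPow_GP a k _ _ (fun m s => by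
    rw [ob1_iter]
    exact Differentiable.fun_sum (fun i _ => (g1_diff _ _ _ _ _).const_mul _))]
  simp only [ob1_iter]
  rw [GP]
  rw [Finset.prod_congr rfl (fun m _ => lag_m (k m) ((a m : ℝ) : ℂ)
    (-(1 / 4 : ℂ) * ((a m : ℝ) : ℂ) * (Z' m * (starRingEnd ℂ) (Z' m))) (Z' m) (Z m))]
  rw [Finset.prod_mul_distrib, Finset.prod_mul_distrib, Finset.prod_mul_distrib]
  have hexp : (∏ m, g1 ((a m : ℝ) : ℂ)
        (-(1 / 4 : ℂ) * ((a m : ℝ) : ℂ) * (Z' m * (starRingEnd ℂ) (Z' m))) (Z' m) 0 0 (Z m))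
      = Complex.exp (-(1 / 4 : ℂ) * ∑ m, (a m : ℂ) *
          (((‖Z m‖ ^ 2 : ℝ) : ℂ) + ((‖Z' m‖ ^ 2 : ℝ) : ℂ) -
            2 * Z m * (starRingEnd ℂ) (Z' m))) := by
    simp only [g1, gfun, pow_zero, one_mul]
    rw [← Complex.exp_sum, Finset.mul_sum]
    congr 1
    refine Finset.sum_congr rfl fun m _ => ?_
    rw [cabs2, cabs2]
    ring
  rw [hexp]
  have harg : ∀ m : Fin n, laguerre 0 (k m)
        (((a m : ℝ) : ℂ) * ((Z m - Z' m) * ((starRingEnd ℂ) (Z m) - (starRingEnd ℂ) (Z' m))) / 2)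
      = laguerre 0 (k m) ((a m : ℂ) * ((‖Z m - Z' m‖ ^ 2 : ℝ) : ℂ) / 2) := by
    intro m
    rw [cabs2, map_sub]
  rw [Finset.prod_congr rfl fun m _ => harg m]
  rw [Finset.prod_mul_distrib]
  -- now pure constants
  have h2 : (∏ j, ((2 : ℂ) ^ k j)) ≠ 0 :=
    Finset.prod_ne_zero_iff.mpr fun j _ => pow_ne_zero _ two_ne_zero
  have hA : (∏ j, ((a j : ℝ) : ℂ) ^ k j) ≠ 0 :=
    Finset.prod_ne_zero_iff.mpr fun j _ => pow_ne_zero _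
      (Complex.ofReal_ne_zero.mpr (ha j).ne')
  have hF : (∏ j, ((Nat.factorial (k j) : ℕ) : ℂ)) ≠ 0 :=
    Finset.prod_ne_zero_iff.mpr fun j _ => Nat.cast_ne_zero.mpr (k j).factorial_ne_zero
  have hconst :
      (((2 ^ (∑ j, k j) * (∏ j, a j ^ k j) * ∏ j, (Nat.factorial (k j) : ℝ) : ℝ)⁻¹ : ℝ) : ℂ) *
          (((((2 * Real.pi) ^ n)⁻¹ * ∏ j, a j : ℝ) : ℂ) * ∏ m, ((a m : ℝ) : ℂ) ^ k m) *
          ((∏ m, (2 : ℂ) ^ k m) * (∏ m, ((k m).factorial : ℂ)))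
        = ((((2 * Real.pi) ^ n)⁻¹ : ℝ) : ℂ) * ∏ j, (a j : ℂ) := by
    have hQ : ((2 : ℂ) * (Real.pi : ℝ)) ^ n ≠ 0 :=
      pow_ne_zero _ (mul_ne_zero two_ne_zero (Complex.ofReal_ne_zero.mpr Real.pi_ne_zero))
    push_cast
    rw [← Finset.prod_pow_eq_pow_sum, mul_inv, mul_inv]
    field_simp
  linear_combination ((∏ j, laguerre 0 (k j)
      ((a j : ℂ) * ((‖Z j - Z' j‖ ^ 2 : ℝ) : ℂ) / 2)) *
    Complex.exp (-(1 / 4 : ℂ) * ∑ m, (a m : ℂ) *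
      (((‖Z m‖ ^ 2 : ℝ) : ℂ) + ((‖Z' m‖ ^ 2 : ℝ) : ℂ) -
        2 * Z m * (starRingEnd ℂ) (Z' m)))) * hconst
end
end
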